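/- For every linear order ≤₁ on ℕ and every a ∈ 2^ℕ, there exists a linear order ≤₂ on ℕ isomorphic to ≤₁ such that ≤₂ Turing-computes a, Turing-computes ≤₁, and Turing-computes an isomorphism between ≤₁ and ≤₂. -/

import Mathlib

/-- Partial functions `ℕ →. ℕ` recursive in an oracle `O : ℕ → ℕ`. -/
inductive RecursiveInOracle (O : ℕ → ℕ) : (ℕ →. ℕ) → Prop
  | oracle : RecursiveInOracle O O
  | zero : RecursiveInOracle O (fun _ => 0)
  | succ : RecursiveInOracle O Nat.succ
  | left : RecursiveInOracle O (fun n => (Nat.unpair n).1)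
  | right : RecursiveInOracle O (fun n => (Nat.unpair n).2)
  | pair {f g : ℕ →. ℕ} : RecursiveInOracle O f → RecursiveInOracle O g →
      RecursiveInOracle O (fun n => Nat.pair <$> f n <*> g n)
  | comp {f g : ℕ →. ℕ} : RecursiveInOracle O f → RecursiveInOracle O g →
      RecursiveInOracle O (fun n => g n >>= f)
  | prec {f g : ℕ →. ℕ} : RecursiveInOracle O f → RecursiveInOracle O g →
      RecursiveInOracle O (Nat.unpaired fun a n =>
        n.rec (f a) fun y IH => do let i ← IH; g (Nat.pair a (Nat.pair y i)))
  | rfind {f : ℕ →. ℕ} : RecursiveInOracle O f →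
      RecursiveInOracle O (fun a => Nat.rfind fun n => (fun m => m = 0) <$> f (Nat.pair a n))

/-- The characteristic function (with values in `ℕ`) of an element of Cantor space. -/
def toNatFun (x : ℕ → Bool) : ℕ → ℕ := fun n => cond (x n) 1 0

/-- Turing reducibility between elements of Cantor space. -/
def TuringLE (x y : ℕ → Bool) : Prop := RecursiveInOracle (toNatFun y) (toNatFun x)

/-- The recursive join of two elements of Cantor space. -/
def join (x y : ℕ → Bool) : ℕ → Bool := fun n => if n % 2 = 0 then x (n / 2) else y (n / 2)

/-- The characteristic function of a binary relation on `ℕ`, as an element of Cantor space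
(via the standard pairing function). -/
noncomputable def chiRel (L : ℕ → ℕ → Prop) : ℕ → Bool := fun n =>
  @decide (L (Nat.unpair n).1 (Nat.unpair n).2) (Classical.dec _)

/- ### auxiliary material -/

lemma RecursiveInOracle.of_partrec (O : ℕ → ℕ) {f : ℕ →. ℕ} (h : Nat.Partrec f) :
    RecursiveInOracle O f := by
  induction h with
  | zero => exact .zero
  | succ => exact .succ
  | left => exact .left
  | right => exact .right
  | pair _ _ ihf ihg => exact .pair ihf ihg
  | comp _ _ ihf ihg => exact .comp ihf ihg
  | prec _ _ ihf ihg => exact .prec ihf ihg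
  | rfind _ ih => exact .rfind ih

lemma RecursiveInOracle.of_eq {O : ℕ → ℕ} {f g : ℕ →. ℕ} (h : RecursiveInOracle O f)
    (he : ∀ n, f n = g n) : RecursiveInOracle O g := by
  have : f = g := funext he
  exact this ▸ h

/-- composing the oracle with a computable function -/
lemma RecursiveInOracle.oracleComp (O : ℕ → ℕ) {q : ℕ → ℕ} (hq : Primrec q) :
    RecursiveInOracle O (↑(fun n => O (q n)) : ℕ →. ℕ) := by
  have h := RecursiveInOracle.comp (.oracle (O := O))
    (RecursiveInOracle.of_partrec O (Nat.Partrec.of_primrec (Primrec.nat_iff.mp hq)))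
  exact h.of_eq (fun n => by simp [PFun.coe_val]; exact Part.bind_some _ _)

/-- total version of composition on the other side -/
lemma RecursiveInOracle.totalComp' (O : ℕ → ℕ) {F h : ℕ → ℕ} (hF : Primrec F)
    (hh : RecursiveInOracle O (↑h : ℕ →. ℕ)) :
    RecursiveInOracle O (↑(fun n => F (h n)) : ℕ →. ℕ) := by
  have hc := RecursiveInOracle.comp
    (RecursiveInOracle.of_partrec O (Nat.Partrec.of_primrec (Primrec.nat_iff.mp hF))) hh
  exact hc.of_eq (fun n => by simp [PFun.coe_val]; exact Part.bind_some _ _)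

lemma RecursiveInOracle.totalPair (O : ℕ → ℕ) {h g : ℕ → ℕ}
    (hh : RecursiveInOracle O (↑h : ℕ →. ℕ)) (hg : RecursiveInOracle O (↑g : ℕ →. ℕ)) :
    RecursiveInOracle O (↑(fun n => Nat.pair (h n) (g n)) : ℕ →. ℕ) := by
  have hc := RecursiveInOracle.pair hh hg
  exact hc.of_eq (fun n => by simp [PFun.coe_val, Seq.seq])

section construction

variable (L₁ : ℕ → ℕ → Prop) (a : ℕ → Bool)

noncomputable def cfun : ℕ → Bool := join a (chiRel L₁)

noncomputable def dfun : ℕ → Bool := fun n => chiRel L₁ (Nat.pair (2*n+1) (2*n))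

noncomputable def ffun : ℕ → ℕ := fun k =>
  if cfun L₁ a (k/2) = dfun L₁ (k/2) then k
  else if k % 2 = 0 then k+1 else k-1

noncomputable def Ltwo : ℕ → ℕ → Prop := fun x y => L₁ (ffun L₁ a x) (ffun L₁ a y)

variable {L₁}

lemma ffun_even (m : ℕ) :
    ffun L₁ a (2*m) = if cfun L₁ a m = dfun L₁ m then 2*m else 2*m+1 := by
  unfold ffun
  have h1 : 2*m/2 = m := by omega
  have h2 : 2*m % 2 = 0 := by omega
  simp [h1, h2]

lemma ffun_odd (m : ℕ) :
    ffun L₁ a (2*m+1) = if cfun L₁ a m = dfun L₁ m then 2*m+1 else 2*m := by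
  unfold ffun
  have h1 : (2*m+1)/2 = m := by omega
  have h2 : (2*m+1) % 2 = 1 := by omega
  simp [h1, h2]

lemma ffun_invol : Function.Involutive (ffun L₁ a) := by
  intro k
  obtain ⟨m, hm | hm⟩ := Nat.even_or_odd' k <;> subst hm <;>
    by_cases h : cfun L₁ a m = dfun L₁ m <;>
      simp [ffun_even, ffun_odd, h]

lemma chiRel_pair (L : ℕ → ℕ → Prop) (x y : ℕ) : chiRel L (Nat.pair x y) = true ↔ L x y := by
  simp [chiRel]

lemma dfun_true (m : ℕ) : dfun L₁ m = true ↔ L₁ (2*m+1) (2*m) := by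
  simp [dfun, chiRel]

lemma cfun_even (n : ℕ) : cfun L₁ a (2*n) = a n := by
  have h1 : 2*n % 2 = 0 := by omega
  have h2 : 2*n/2 = n := by omega
  simp [cfun, join, h1, h2]

lemma cfun_odd (n : ℕ) : cfun L₁ a (2*n+1) = chiRel L₁ n := by
  have h1 : (2*n+1) % 2 = 1 := by omega
  have h2 : (2*n+1)/2 = n := by omega
  simp [cfun, join, h1, h2]

variable (h₁ : IsLinearOrder ℕ L₁)

include h₁

lemma L1_antisymm {x y : ℕ} (hxy : L₁ x y) (hyx : L₁ y x) : x = y :=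
  h₁.toIsPartialOrder.toAntisymm.antisymm _ _ hxy hyx

lemma L1_total (x y : ℕ) : L₁ x y ∨ L₁ y x := h₁.toTotal.total x y

lemma not_L1_succ {m : ℕ} (h : ¬ L₁ (2*m+1) (2*m)) : L₁ (2*m) (2*m+1) :=
  (L1_total h₁ (2*m) (2*m+1)).resolve_right (fun hh => h hh)

lemma key (m : ℕ) : chiRel (Ltwo L₁ a) (Nat.pair (2*m+1) (2*m)) = cfun L₁ a m := by
  rw [Bool.eq_iff_iff, chiRel_pair]
  show L₁ (ffun L₁ a (2*m+1)) (ffun L₁ a (2*m)) ↔ _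
  rw [ffun_even, ffun_odd]
  by_cases hcd : cfun L₁ a m = dfun L₁ m
  · rw [if_pos hcd, if_pos hcd, hcd]
    exact (dfun_true m).symm
  · rw [if_neg hcd, if_neg hcd]
    have h2 : cfun L₁ a m = !(dfun L₁ m) := by
      cases h : dfun L₁ m <;> cases h' : cfun L₁ a m <;> simp_all
    rw [h2]
    cases h : dfun L₁ m
    · have hd : ¬ L₁ (2*m+1) (2*m) := by rw [← dfun_true (L₁ := L₁) m]; simp [h]
      simp [not_L1_succ h₁ hd]
    · have hl : L₁ (2*m+1) (2*m) := (dfun_true m).mp h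
      have hn : ¬ L₁ (2*m) (2*m+1) := fun hh => by
        have := L1_antisymm h₁ hh hl; omega
      simp [hn]

lemma key' (m : ℕ) :
    toNatFun (chiRel (Ltwo L₁ a)) (Nat.pair (2*m+1) (2*m)) = toNatFun (cfun L₁ a) m := by
  unfold toNatFun
  rw [key a h₁ m]

end construction

/-- For every linear order `≤₁` on `ℕ` and every `a ∈ 2^ℕ` there is a linear order `≤₂` on
`ℕ` isomorphic to `≤₁` which Turing-computes `a`, Turing-computes `≤₁`, and
Turing-computes an isomorphism between `≤₁` and `≤₂`. -/
theorem stmt6 (L₁ : ℕ → ℕ → Prop) (h₁ : IsLinearOrder ℕ L₁) (a : ℕ → Bool) :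
    ∃ L₂ : ℕ → ℕ → Prop, IsLinearOrder ℕ L₂ ∧
      TuringLE a (chiRel L₂) ∧
      TuringLE (chiRel L₁) (chiRel L₂) ∧
      ∃ e : ℕ ≃ ℕ, (∀ m n : ℕ, L₂ m n ↔ L₁ (e m) (e n)) ∧
        RecursiveInOracle (toNatFun (chiRel L₂)) (fun n => Part.some (e n)) := by
  classical
  set O : ℕ → ℕ := toNatFun (chiRel (Ltwo L₁ a)) with hO
  refine ⟨Ltwo L₁ a, ?_, ?_, ?_, ?_⟩
  · -- linear order
    have finj : Function.Injective (ffun L₁ a) := (ffun_invol a).injective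
    exact { refl := fun x => h₁.toIsPartialOrder.toIsPreorder.toRefl.refl _,
            trans := fun x y z hxy hyz =>
              h₁.toIsPartialOrder.toIsPreorder.toIsTrans.trans _ _ _ hxy hyz,
            antisymm := fun x y hxy hyx => finj (L1_antisymm h₁ hxy hyx),
            total := fun x y => L1_total h₁ _ _ }
  · -- a ≤T L₂
    have hq : Primrec (fun n : ℕ => Nat.pair (2*(2*n)+1) (2*(2*n))) := by
      apply Primrec₂.natPair.comp
      · exact Primrec.succ.comp (Primrec.nat_mul.comp (Primrec.const 4) Primrec.id)
        |>.of_eq (by intro n; simp only [id_eq]; omega)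
      · exact (Primrec.nat_mul.comp (Primrec.const 4) Primrec.id).of_eq (by intro n; simp only [id_eq]; omega)
    have h := RecursiveInOracle.oracleComp O hq
    exact h.of_eq (fun n => by
      simp only [PFun.coe_val, hO]
      rw [key' a h₁]
      simp [toNatFun, cfun_even])
  · -- L₁ ≤T L₂
    have hq : Primrec (fun n : ℕ => Nat.pair (2*(2*n+1)+1) (2*(2*n+1))) := by
      apply Primrec₂.natPair.comp
      · exact (Primrec.nat_add.comp (Primrec.nat_mul.comp (Primrec.const 4) Primrec.id)
          (Primrec.const 3)).of_eq (by intro n; simp only [id_eq]; omega)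
      · exact (Primrec.nat_add.comp (Primrec.nat_mul.comp (Primrec.const 4) Primrec.id)
          (Primrec.const 2)).of_eq (by intro n; simp only [id_eq]; omega)
    have h := RecursiveInOracle.oracleComp O hq
    exact h.of_eq (fun n => by
      simp only [PFun.coe_val, hO]
      rw [key' a h₁]
      simp [toNatFun, cfun_odd])
  · -- the isomorphism
    refine ⟨⟨ffun L₁ a, ffun L₁ a, fun x => ffun_invol a x, fun x => ffun_invol a x⟩,
      fun m n => Iff.rfl, ?_⟩
    -- compute ffun from O
    set q₁ : ℕ → ℕ := fun k => Nat.pair (2*(k/2)+1) (2*(k/2)) with hq₁def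
    set q₂ : ℕ → ℕ := fun k => Nat.pair (2*(2*(q₁ k)+1)+1) (2*(2*(q₁ k)+1)) with hq₂def
    have hdiv : Primrec (fun k : ℕ => k/2) := Primrec.nat_div.comp Primrec.id (Primrec.const 2)
    have hq₁ : Primrec q₁ := by
      apply Primrec₂.natPair.comp
      · exact Primrec.succ.comp (Primrec.nat_mul.comp (Primrec.const 2) hdiv)
      · exact Primrec.nat_mul.comp (Primrec.const 2) hdiv
    have hq₂ : Primrec q₂ := by
      apply Primrec₂.natPair.comp
      · exact Primrec.succ.comp (Primrec.nat_mul.comp (Primrec.const 2)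
          (Primrec.succ.comp (Primrec.nat_mul.comp (Primrec.const 2) hq₁)))
      · exact Primrec.nat_mul.comp (Primrec.const 2)
          (Primrec.succ.comp (Primrec.nat_mul.comp (Primrec.const 2) hq₁))
    have h1 : RecursiveInOracle O (↑(fun k => O (q₁ k)) : ℕ →. ℕ) := RecursiveInOracle.oracleComp O hq₁
    have h2 : RecursiveInOracle O (↑(fun k => O (q₂ k)) : ℕ →. ℕ) := RecursiveInOracle.oracleComp O hq₂
    have h3 : RecursiveInOracle O (↑(fun k => Nat.pair (O (q₁ k)) (O (q₂ k))) : ℕ →. ℕ) :=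
      RecursiveInOracle.totalPair O h1 h2
    have hid : RecursiveInOracle O (↑(fun k : ℕ => k) : ℕ →. ℕ) :=
      RecursiveInOracle.of_partrec O (Nat.Partrec.of_primrec Nat.Primrec.id)
    have h4 : RecursiveInOracle O
        (↑(fun k => Nat.pair k (Nat.pair (O (q₁ k)) (O (q₂ k)))) : ℕ →. ℕ) :=
      RecursiveInOracle.totalPair O hid h3
    set G : ℕ → ℕ := fun m =>
      if (Nat.unpair (Nat.unpair m).2).1 = (Nat.unpair (Nat.unpair m).2).2
      then (Nat.unpair m).1
      else if (Nat.unpair m).1 % 2 = 0 then (Nat.unpair m).1 + 1 else (Nat.unpair m).1 - 1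
      with hGdef
    have hu1 : Primrec (fun m : ℕ => (Nat.unpair m).1) := Primrec.fst.comp Primrec.unpair
    have hu21 : Primrec (fun m : ℕ => (Nat.unpair (Nat.unpair m).2).1) :=
      Primrec.fst.comp (Primrec.unpair.comp (Primrec.snd.comp Primrec.unpair))
    have hu22 : Primrec (fun m : ℕ => (Nat.unpair (Nat.unpair m).2).2) :=
      Primrec.snd.comp (Primrec.unpair.comp (Primrec.snd.comp Primrec.unpair))
    have hG : Primrec G := by
      apply Primrec.ite (Primrec.eq.comp hu21 hu22) hu1
      exact Primrec.ite (Primrec.eq.comp (Primrec.nat_mod.comp hu1 (Primrec.const 2))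
        (Primrec.const 0)) (Primrec.succ.comp hu1) (Primrec.nat_sub.comp hu1 (Primrec.const 1))
    have h5 := RecursiveInOracle.totalComp' O hG h4
    apply h5.of_eq
    intro k
    simp only [PFun.coe_val, Part.some_inj]
    show G (Nat.pair k (Nat.pair (O (q₁ k)) (O (q₂ k)))) = ffun L₁ a k
    have hu : O (q₁ k) = toNatFun (cfun L₁ a) (k/2) := by
      rw [hO, hq₁def]; exact key' a h₁ (k/2)
    have hv : O (q₂ k) = toNatFun (dfun L₁) (k/2) := by
      rw [hO, hq₂def]
      rw [key' a h₁]
      simp only [toNatFun]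
      rw [cfun_odd (L₁ := L₁) a (q₁ k)]
      rw [hq₁def]
      rfl
    have hGval : G (Nat.pair k (Nat.pair (O (q₁ k)) (O (q₂ k)))) = ffun L₁ a k := by
      rw [hGdef]
      simp only [Nat.unpair_pair, hu, hv]
      have hcond : (toNatFun (cfun L₁ a) (k/2) = toNatFun (dfun L₁) (k/2)) ↔
          (cfun L₁ a (k/2) = dfun L₁ (k/2)) := by
        simp only [toNatFun]
        cases cfun L₁ a (k/2) <;> cases dfun L₁ (k/2) <;> simp
      by_cases hcd : cfun L₁ a (k/2) = dfun L₁ (k/2)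
      · rw [if_pos (hcond.mpr hcd)]
        unfold ffun
        rw [if_pos hcd]
      · rw [if_neg (fun hh => hcd (hcond.mp hh))]
        unfold ffun
        rw [if_neg hcd]
    exact hGval
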